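/- Let G be an FC group. For every finite-dimensional unitary representation D : G → U(n), there exists a normal subgroup N of G of finite index such that D maps the commutator subgroup N' of N to the identity. -/

import Mathlib

theorem stmt_1 {G : Type*} [Group G] (n : ℕ)
    (hFC : ∀ x : G, (Set.range fun h : G => h * x * h⁻¹).Finite)
    (D : G →* Matrix.unitaryGroup (Fin n) ℂ) :
    ∃ N : Subgroup G, N.Normal ∧ N.FiniteIndex ∧
      ∀ x ∈ Subgroup.map N.subtype (commutator ↥N), D x = 1 := by
  classical
  set M := Matrix (Fin n) (Fin n) ℂ with hM
  set S : Set M := Set.range (fun g : G => (D g : M)) with hS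
  obtain ⟨b, hbS, hbspan, hbind⟩ := exists_linearIndependent ℂ S
  have hbfin : b.Finite := hbind.setFinite
  haveI : Finite ↥b := hbfin.to_subtype
  have hpick : ∀ m : b, ∃ g : G, (D g : M) = m := fun m => hbS m.2
  choose f hf using hpick
  set K : Set G := ⋃ m : b, Set.range (fun h : G => h * f m * h⁻¹) with hK
  have hKfin : K.Finite := Set.finite_iUnion (fun m => hFC (f m))
  have hfK : ∀ m : b, f m ∈ K := by
    intro m
    exact Set.mem_iUnion.mpr ⟨m, ⟨1, by group⟩⟩
  have hKconj : ∀ k ∈ K, ∀ h : G, h * k * h⁻¹ ∈ K := by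
    intro k hk h
    obtain ⟨m, a, rfl⟩ := Set.mem_iUnion.mp hk
    exact Set.mem_iUnion.mpr ⟨m, ⟨h * a, by group⟩⟩
  refine ⟨Subgroup.centralizer K, ?_, ?_, ?_⟩
  · constructor
    intro x hx h
    rw [Subgroup.mem_centralizer_iff] at hx ⊢
    intro k hk
    have hk' := hx _ (hKconj k hk h⁻¹)
    calc k * (h * x * h⁻¹) = h * ((h⁻¹ * k * h⁻¹⁻¹) * x) * h⁻¹ := by group
      _ = h * (x * (h⁻¹ * k * h⁻¹⁻¹)) * h⁻¹ := by rw [hk']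
      _ = (h * x * h⁻¹) * k := by group
  · haveI : Finite ↥K := hKfin.to_subtype
    have hcent : ∀ k : G, (Subgroup.centralizer {k}).FiniteIndex := by
      intro k
      rw [Subgroup.centralizer_eq_comap_stabilizer]
      constructor
      have hsurj : (ConjAct.toConjAct (G := G)).toMonoidHom.range = ⊤ :=
        MonoidHom.range_eq_top.mpr ConjAct.toConjAct.surjective
      erw [Subgroup.index_comap, hsurj, Subgroup.relIndex_top_right,
        MulAction.index_stabilizer]
      have horb : MulAction.orbit (ConjAct G) k = Set.range (fun h : G => h * k * h⁻¹) := by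
        ext x
        simp only [ConjAct.mem_orbit_conjAct, Set.mem_range]
        rw [isConj_comm, isConj_iff]
      rw [horb]
      have hfin : (Set.range (fun h : G => h * k * h⁻¹)).Finite := hFC k
      rw [Ne, Set.ncard_eq_zero hfin]
      intro hemp
      have : k ∈ Set.range (fun h : G => h * k * h⁻¹) := ⟨1, by group⟩
      simp [hemp] at this
    have hle : (⨅ k : K, Subgroup.centralizer {(k : G)}) ≤ Subgroup.centralizer K := by
      intro x hx
      rw [Subgroup.mem_centralizer_iff]
      intro k hk
      have := Subgroup.mem_iInf.mp hx ⟨k, hk⟩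
      rw [Subgroup.mem_centralizer_iff] at this
      exact this k rfl
    haveI := Subgroup.finiteIndex_iInf (fun k : K => hcent k)
    exact Subgroup.finiteIndex_of_le hle
  · set N := Subgroup.centralizer K with hN
    -- key commuting fact
    have key : ∀ x ∈ N, ∀ g : G, (D x : M) * (D g : M) = (D g : M) * (D x : M) := by
      intro x hx g
      set W : Submodule ℂ M :=
        { carrier := {m : M | (D x : M) * m = m * (D x : M)}
          add_mem' := by
            intro a b ha hb
            simp only [Set.mem_setOf_eq] at *
            rw [mul_add, add_mul, ha, hb]
          zero_mem' := by simp
          smul_mem' := by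
            intro c a ha
            simp only [Set.mem_setOf_eq] at *
            rw [mul_smul_comm, smul_mul_assoc, ha] } with hW
      have hbW : b ⊆ (W : Set M) := by
        intro m hm
        have hcomm : f ⟨m, hm⟩ * x = x * f ⟨m, hm⟩ :=
          Subgroup.mem_centralizer_iff.mp hx _ (hfK ⟨m, hm⟩)
        have : (D (f ⟨m, hm⟩) : M) * (D x : M) = (D x : M) * (D (f ⟨m, hm⟩) : M) := by
          have h1 := congrArg (fun y => ((D y : Matrix.unitaryGroup (Fin n) ℂ) : M)) hcomm
          simpa [map_mul] using h1
        show (D x : M) * m = m * (D x : M)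
        rw [← show (D (f ⟨m, hm⟩) : M) = m from hf ⟨m, hm⟩, this]
      have hspan : (D g : M) ∈ Submodule.span ℂ b := by
        rw [hbspan]
        exact Submodule.subset_span ⟨g, rfl⟩
      exact Submodule.span_le.mpr hbW hspan
    intro x hx
    have hle : Subgroup.map N.subtype (commutator ↥N) ≤ D.ker := by
      rw [commutator_def, Subgroup.map_commutator, Subgroup.commutator_le]
      intro p hp q hq
      obtain ⟨a, -, rfl⟩ := hp
      obtain ⟨c, -, rfl⟩ := hq
      have hc : D (N.subtype a) * D (N.subtype c) = D (N.subtype c) * D (N.subtype a) :=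
        Subtype.ext (key _ a.2 _)
      rw [MonoidHom.mem_ker, commutatorElement_def]
      simp only [map_mul, map_inv]
      rw [hc]
      group
    exact hle hx
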